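/- Let n, m ≥ 2 and let P_{nm} = P_n □ P_m be the Cartesian product of paths P_n and P_m. Then gp(P_{nm}\bar{P}_{nm}) = 10 if n = m = 3, and gp(P_{nm}\bar{P}_{nm}) = nm otherwise. -/

import Mathlib

open SimpleGraph

variable {V : Type*}

/-- `v` lies on a geodesic (shortest path) between `u` and `w` in `G`. -/
def liesOnGeodesic (G : SimpleGraph V) (u v w : V) : Prop :=
  G.Reachable u w ∧ G.dist u v + G.dist v w = G.dist u w

/-- `S` is a general position set in `G`: no element of `S` lies on a geodesic
between two other elements of `S`. -/
def isGenPosSet (G : SimpleGraph V) (S : Set V) : Prop :=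
  ∀ u ∈ S, ∀ v ∈ S, ∀ w ∈ S, u ≠ v → v ≠ w → u ≠ w → ¬ liesOnGeodesic G u v w

/-- The general position number `gp(G)` of `G`. -/
noncomputable def gpNum (G : SimpleGraph V) : ℕ :=
  sSup {n : ℕ | ∃ S : Set V, isGenPosSet G S ∧ S.ncard = n}

/-- `S` is a `3`-general position set in `G`: no three vertices of `S` lie on a
common geodesic of length at most `3`. -/
def isGP3Set (G : SimpleGraph V) (S : Set V) : Prop :=
  ∀ u ∈ S, ∀ v ∈ S, ∀ w ∈ S, u ≠ v → v ≠ w → u ≠ w →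
    ¬ (liesOnGeodesic G u v w ∧ G.dist u w ≤ 3)

/-- The `3`-general position number `gp₃(G)` of `G`. -/
noncomputable def gp3Num (G : SimpleGraph V) : ℕ :=
  sSup {n : ℕ | ∃ S : Set V, isGP3Set G S ∧ S.ncard = n}

/-- The complementary prism `G\bar{G}`: the disjoint union of `G` (left copy) and
its complement `Gᶜ` (right copy), together with the perfect matching joining each
vertex to its copy. -/
def compPrism (G : SimpleGraph V) : SimpleGraph (V ⊕ V) where
  Adj x y :=
    match x, y with
    | Sum.inl a, Sum.inl b => G.Adj a b
    | Sum.inr a, Sum.inr b => Gᶜ.Adj a b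
    | Sum.inl a, Sum.inr b => a = b
    | Sum.inr a, Sum.inl b => a = b
  symm := by
    constructor
    rintro (a | a) (b | b) h
    · exact (G.adj_comm a b).mp h
    · exact Eq.symm h
    · exact Eq.symm h
    · exact (Gᶜ.adj_comm a b).mp h
  loopless := by
    constructor
    rintro (a | a) h
    · exact G.loopless.irrefl a h
    · exact Gᶜ.loopless.irrefl a h

/-- The eccentricity of a vertex: the maximum distance to another vertex. -/
noncomputable def ecc (G : SimpleGraph V) (v : V) : ℕ :=
  sSup (Set.range (G.dist v))

/-- The radius of a graph: the minimum eccentricity. -/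
noncomputable def rad (G : SimpleGraph V) : ℕ :=
  sInf (Set.range (ecc G))

/-- The diameter of a graph: the maximum distance between two vertices. -/
noncomputable def graphDiam (G : SimpleGraph V) : ℕ :=
  sSup {n : ℕ | ∃ u v : V, G.dist u v = n}

/-- `\bar{gp}₃(G)`: the maximum, over all `gp₃`-sets `S` of `G`, of the `3`-general
position number of the subgraph of `Gᶜ` induced by the vertices outside `S`. -/
noncomputable def barGp3 (G : SimpleGraph V) : ℕ :=
  sSup {n : ℕ | ∃ S : Set V, isGP3Set G S ∧ S.ncard = gp3Num G ∧
          gp3Num ((Gᶜ).induce Sᶜ) = n}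

/-- A cut vertex: its removal disconnects the graph. -/
def isCutVertex (G : SimpleGraph V) (v : V) : Prop :=
  ¬ (G.induce {u : V | u ≠ v}).Connected

/-- `B` is the vertex set of a `2`-connected subgraph of `G`:
it has at least `3` vertices and removing any one vertex leaves it connected. -/
def isTwoConnectedSet (G : SimpleGraph V) (B : Set V) : Prop :=
  3 ≤ B.ncard ∧ ∀ v ∈ B, (G.induce (B \ {v})).Connected

/-- A block graph: every maximal `2`-connected subgraph is a clique. -/
def isBlockGraph (G : SimpleGraph V) : Prop :=
  ∀ B : Set V, isTwoConnectedSet G B →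
    (∀ B' : Set V, isTwoConnectedSet G B' → B ⊆ B' → B = B') →
    G.IsClique B

/-- Complete multipartite graph: the vertices can be partitioned (via an
equivalence relation, whose classes are the parts) so that two vertices are
adjacent iff they lie in different parts. -/
def isCompleteMultipartite (G : SimpleGraph V) : Prop :=
  ∃ r : V → V → Prop, Equivalence r ∧ ∀ u v, G.Adj u v ↔ ¬ r u v

/-- The hypercube `Q_n`: binary strings of length `n`, two strings being
adjacent when they differ in exactly one coordinate. -/
def hypercube (n : ℕ) : SimpleGraph (Fin n → Bool) where
  Adj x y := {i : Fin n | x i ≠ y i}.ncard = 1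
  symm := by
    constructor
    intro x y h
    simpa [ne_comm] using h
  loopless := by
    constructor
    intro x
    simp

/-- The block graph `G_k`: a chain of `k+1` triangles `{vᵢ, uᵢ, vᵢ₊₁}`,
with the `v`-vertices `v₁, …, v_{k+2}` indexed by `Fin (k+2)` (left summand)
and the `u`-vertices `u₁, …, u_{k+1}` indexed by `Fin (k+1)` (right summand);
the edges are `vᵢvᵢ₊₁`, `uᵢvᵢ` and `uᵢvᵢ₊₁`. -/
def Gk (k : ℕ) : SimpleGraph (Fin (k + 2) ⊕ Fin (k + 1)) where
  Adj x y :=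
    match x, y with
    | Sum.inl a, Sum.inl b => a.val + 1 = b.val ∨ b.val + 1 = a.val
    | Sum.inl a, Sum.inr b => a.val = b.val ∨ a.val = b.val + 1
    | Sum.inr a, Sum.inl b => b.val = a.val ∨ b.val = a.val + 1
    | Sum.inr _, Sum.inr _ => False
  symm := by
    constructor
    rintro (a | a) (b | b) h
    · exact Or.symm h
    · exact h
    · exact h
    · exact h
  loopless := by
    constructor
    rintro (a | a) h
    · omega
    · exact h


set_option linter.unusedSectionVars false
set_option synthInstance.maxSize 1024

section Generic
variable {G : SimpleGraph V} {u v : V}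

lemma dist_le_two_of_common {w : V} (h1 : G.Adj u w) (h2 : G.Adj w v) : G.dist u v ≤ 2 := by
  have h := SimpleGraph.dist_le (Walk.cons h1 (Walk.cons h2 Walk.nil))
  simpa using h

lemma dist_le_three_of_chain {a b : V} (h1 : G.Adj u a) (h2 : G.Adj a b) (h3 : G.Adj b v) :
    G.dist u v ≤ 3 := by
  have h := SimpleGraph.dist_le (Walk.cons h1 (Walk.cons h2 (Walk.cons h3 Walk.nil)))
  simpa using h

lemma cases_of_dist_le_two (hr : G.Reachable u v) (h : G.dist u v ≤ 2) :
    u = v ∨ G.Adj u v ∨ ∃ w, G.Adj u w ∧ G.Adj w v := by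
  obtain ⟨p, hp⟩ := hr.exists_walk_length_eq_dist
  match p, hp with
  | Walk.nil, _ => exact Or.inl rfl
  | Walk.cons h Walk.nil, _ => exact Or.inr (Or.inl h)
  | Walk.cons h1 (Walk.cons h2 Walk.nil), _ => exact Or.inr (Or.inr ⟨_, h1, h2⟩)
  | Walk.cons h1 (Walk.cons h2 (Walk.cons h3 q)), hp =>
      exfalso
      have : (Walk.cons h1 (Walk.cons h2 (Walk.cons h3 q))).length = q.length + 3 := by
        simp [Walk.length_cons]
      omega

lemma two_le_dist (hne : u ≠ v) (hadj : ¬ G.Adj u v) (hr : G.Reachable u v) :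
    2 ≤ G.dist u v := by
  have h0 : G.dist u v ≠ 0 := by
    rw [SimpleGraph.dist_ne_zero_iff_ne_and_reachable]; exact ⟨hne, hr⟩
  have h1 : G.dist u v ≠ 1 := fun h => hadj (SimpleGraph.dist_eq_one_iff_adj.mp h)
  omega

lemma three_le_dist (hne : u ≠ v) (hadj : ¬ G.Adj u v)
    (hcom : ∀ w, ¬ (G.Adj u w ∧ G.Adj w v)) (hr : G.Reachable u v) :
    3 ≤ G.dist u v := by
  by_contra h
  push_neg at h
  rcases cases_of_dist_le_two hr (by omega) with h' | h' | ⟨w, hw⟩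
  · exact hne h'
  · exact hadj h'
  · exact hcom _ hw

end Generic

namespace CP

open Sum

variable {G : SimpleGraph V}

lemma adj_ll {a b : V} : (compPrism G).Adj (inl a) (inl b) ↔ G.Adj a b := Iff.rfl
lemma adj_rr {a b : V} : (compPrism G).Adj (inr a) (inr b) ↔ (a ≠ b ∧ ¬ G.Adj a b) := by
  show Gᶜ.Adj a b ↔ _
  rw [compl_adj]
lemma adj_lr {a b : V} : (compPrism G).Adj (inl a) (inr b) ↔ a = b := Iff.rfl
lemma adj_rl {a b : V} : (compPrism G).Adj (inr a) (inl b) ↔ a = b := Iff.rfl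

/-- the left copy embeds as a hom -/
def inlHom (G : SimpleGraph V) : G →g compPrism G where
  toFun := inl
  map_rel' := fun h => h

lemma connected (hG : G.Connected) : (compPrism G).Connected := by
  have hne : Nonempty V := hG.nonempty
  constructor
  intro x y
  have key : ∀ a : V, (compPrism G).Reachable (inl a) x → (compPrism G).Reachable (inl a) y →
      (compPrism G).Reachable x y := fun a h1 h2 => h1.symm.trans h2
  have hl : ∀ z : V ⊕ V, ∃ a : V, (compPrism G).Reachable z (inl a) := by
    rintro (a | a)
    · exact ⟨a, Reachable.refl _⟩
    · exact ⟨a, Adj.reachable (by rw [adj_rl])⟩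
  obtain ⟨a, ha⟩ := hl x
  obtain ⟨b, hb⟩ := hl y
  have : G.Reachable a b := hG.preconnected a b
  have : (compPrism G).Reachable (inl a) (inl b) := Reachable.map (inlHom G) this
  exact (ha.trans this).trans hb.symm

variable (hG : G.Connected)
include hG

lemma dist_ll_pos {a b : V} (h : a ≠ b) : 1 ≤ (compPrism G).dist (inl a) (inl b) :=
  (CP.connected hG).pos_dist_of_ne (by simp [h])

lemma dist_lr_self (a : V) : (compPrism G).dist (inl a) (inr a) = 1 :=
  SimpleGraph.dist_eq_one_iff_adj.mpr (adj_lr.mpr rfl)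

lemma dist_lr {a b : V} (h : a ≠ b) : (compPrism G).dist (inl a) (inr b) = 2 := by
  have hub : (compPrism G).dist (inl a) (inr b) ≤ 2 := by
    by_cases hadj : G.Adj a b
    · exact dist_le_two_of_common (w := inl b) (adj_ll.mpr hadj) (adj_lr.mpr rfl)
    · exact dist_le_two_of_common (w := inr a) (adj_lr.mpr rfl) (adj_rr.mpr ⟨h, hadj⟩)
  have hlb : 2 ≤ (compPrism G).dist (inl a) (inr b) :=
    two_le_dist (by simp) (by rw [adj_lr]; exact h) ((CP.connected hG) (inl a) (inr b))
  omega

lemma dist_rl {a b : V} (h : a ≠ b) : (compPrism G).dist (inr a) (inl b) = 2 := by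
  rw [SimpleGraph.dist_comm]; exact dist_lr hG (Ne.symm h)

lemma dist_ll_le_three {a b : V} (h : a ≠ b) (hadj : ¬ G.Adj a b) :
    (compPrism G).dist (inl a) (inl b) ≤ 3 :=
  dist_le_three_of_chain (a := inr a) (b := inr b) (adj_lr.mpr rfl) (adj_rr.mpr ⟨h, hadj⟩)
    (adj_rl.mpr rfl)

lemma two_le_dist_ll {a b : V} (h : a ≠ b) (hadj : ¬ G.Adj a b) :
    2 ≤ (compPrism G).dist (inl a) (inl b) :=
  two_le_dist (by simp [h]) (by rw [adj_ll]; exact hadj) ((CP.connected hG) _ _)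

lemma dist_rr_eq_one {a b : V} (h : a ≠ b) (hadj : ¬ G.Adj a b) :
    (compPrism G).dist (inr a) (inr b) = 1 :=
  SimpleGraph.dist_eq_one_iff_adj.mpr (adj_rr.mpr ⟨h, hadj⟩)

lemma dist_ll_cases {a b : V} (h : (compPrism G).dist (inl a) (inl b) ≤ 2) :
    a = b ∨ G.Adj a b ∨ ∃ w, G.Adj a w ∧ G.Adj w b := by
  rcases cases_of_dist_le_two ((CP.connected hG) _ _) h with h' | h' | ⟨w, hw1, hw2⟩
  · exact Or.inl (by simpa using h')
  · exact Or.inr (Or.inl (adj_ll.mp h'))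
  · match w with
    | inl w => exact Or.inr (Or.inr ⟨w, hw1, hw2⟩)
    | inr w =>
        left
        have h1 : a = w := adj_lr.mp hw1
        have h2 : w = b := adj_rl.mp hw2
        exact h1.trans h2

lemma dist_rr_eq_three {a b : V} (hadj : G.Adj a b)
    (hcom : ∀ w, ¬ ((compPrism G).Adj (inr a) w ∧ (compPrism G).Adj w (inr b))) :
    (compPrism G).dist (inr a) (inr b) = 3 := by
  have hub : (compPrism G).dist (inr a) (inr b) ≤ 3 :=
    dist_le_three_of_chain (a := inl a) (b := inl b) (adj_rl.mpr rfl) (adj_ll.mpr hadj)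
      (adj_lr.mpr rfl)
  have hlb : 3 ≤ (compPrism G).dist (inr a) (inr b) :=
    three_le_dist (by simp [hadj.ne]) (by rw [adj_rr]; tauto) hcom ((CP.connected hG) _ _)
  omega

lemma dist_rr_eq_two {a b : V} (hadj : G.Adj a b) {w : V}
    (hw1 : ¬ G.Adj a w) (hw2 : ¬ G.Adj w b) (hwa : w ≠ a) (hwb : w ≠ b) :
    (compPrism G).dist (inr a) (inr b) = 2 := by
  have hub := dist_le_two_of_common (G := compPrism G)
    (adj_rr.mpr ⟨Ne.symm hwa, hw1⟩) (adj_rr.mpr ⟨hwb, hw2⟩)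
  have hlb : 2 ≤ (compPrism G).dist (inr a) (inr b) :=
    two_le_dist (by simp [hadj.ne]) (by rw [adj_rr]; tauto) ((CP.connected hG) _ _)
  omega

end CP

section Grid
open Sum

abbrev Grid (n m : ℕ) : SimpleGraph (Fin n × Fin m) := (pathGraph n).boxProd (pathGraph m)

def l1 {n m : ℕ} (u v : Fin n × Fin m) : ℕ :=
  ((u.1.val - v.1.val) + (v.1.val - u.1.val)) + ((u.2.val - v.2.val) + (v.2.val - u.2.val))

lemma grid_adj_iff {n m : ℕ} {u v : Fin n × Fin m} :
    (Grid n m).Adj u v ↔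
      ((u.1.val + 1 = v.1.val ∨ v.1.val + 1 = u.1.val) ∧ u.2.val = v.2.val) ∨
      ((u.2.val + 1 = v.2.val ∨ v.2.val + 1 = u.2.val) ∧ u.1.val = v.1.val) := by
  rw [boxProd_adj, pathGraph_adj, pathGraph_adj, Fin.val_eq_val, Fin.val_eq_val]

lemma grid_adj_l1 {n m : ℕ} {u v : Fin n × Fin m} (h : (Grid n m).Adj u v) : l1 u v = 1 := by
  rw [grid_adj_iff] at h
  unfold l1
  omega

lemma l1_triangle {n m : ℕ} (u w v : Fin n × Fin m) : l1 u v ≤ l1 u w + l1 w v := by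
  unfold l1; omega

lemma l1_eq_zero {n m : ℕ} {u v : Fin n × Fin m} (h : l1 u v = 0) : u = v := by
  unfold l1 at h
  have h1 : u.1 = v.1 := Fin.val_inj.mp (by omega)
  have h2 : u.2 = v.2 := Fin.val_inj.mp (by omega)
  exact Prod.ext h1 h2

lemma grid_adj_parity {n m : ℕ} {u v : Fin n × Fin m} (h : (Grid n m).Adj u v) :
    (u.1.val + u.2.val) % 2 ≠ (v.1.val + v.2.val) % 2 := by
  rw [grid_adj_iff] at h
  omega

lemma grid_connected {n m : ℕ} (hn : 2 ≤ n) (hm : 2 ≤ m) : (Grid n m).Connected := by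
  obtain ⟨n', rfl⟩ : ∃ n', n = n' + 1 := ⟨n - 1, by omega⟩
  obtain ⟨m', rfl⟩ : ∃ m', m = m' + 1 := ⟨m - 1, by omega⟩
  exact (connected_boxProd).mpr ⟨pathGraph_connected _, pathGraph_connected _⟩

lemma grid_not_adj_of_l1 {n m : ℕ} {u v : Fin n × Fin m} (h : 2 ≤ l1 u v) :
    ¬ (Grid n m).Adj u v := fun ha => by have := grid_adj_l1 ha; omega

lemma grid_no_common_of_l1 {n m : ℕ} {u v : Fin n × Fin m} (h : 3 ≤ l1 u v) (w : Fin n × Fin m) :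
    ¬ ((Grid n m).Adj u w ∧ (Grid n m).Adj w v) := by
  rintro ⟨h1, h2⟩
  have := grid_adj_l1 h1
  have := grid_adj_l1 h2
  have := l1_triangle u w v
  omega

lemma far_exists {n m : ℕ} (hn : 2 ≤ n) (hm : 2 ≤ m) (h4 : 4 ≤ n ∨ 4 ≤ m)
    (x : Fin n × Fin m) : ∃ z : Fin n × Fin m, 3 ≤ l1 x z := by
  refine ⟨(⟨if 2 * x.1.val ≤ n - 1 then n - 1 else 0, by split <;> omega⟩,
           ⟨if 2 * x.2.val ≤ m - 1 then m - 1 else 0, by split <;> omega⟩), ?_⟩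
  have h1 := x.1.isLt
  have h2 := x.2.isLt
  unfold l1
  simp only
  split_ifs <;> simp <;> omega

end Grid

section LowerGeneral
open Sum

lemma lower_general {n m : ℕ} (hn : 2 ≤ n) (hm : 2 ≤ m) :
    ∃ S : Set ((Fin n × Fin m) ⊕ (Fin n × Fin m)),
      isGenPosSet (compPrism (Grid n m)) S ∧ S.ncard = n * m := by
  have hG := grid_connected hn hm
  set E : Set (Fin n × Fin m) := {v | (v.1.val + v.2.val) % 2 = 0} with hE
  refine ⟨Sum.inl '' E ∪ Sum.inr '' Eᶜ, ?_, ?_⟩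
  · -- general position
    have hsame : ∀ x y : Fin n × Fin m,
        (x.1.val + x.2.val) % 2 = (y.1.val + y.2.val) % 2 → ¬ (Grid n m).Adj x y :=
      fun x y hp hadj => grid_adj_parity hadj hp
    intro u hu v hv w hw huv hvw huw
    rintro ⟨-, heq⟩
    rcases hu with ⟨x, hx, rfl⟩ | ⟨x, hx, rfl⟩ <;>
      rcases hv with ⟨y, hy, rfl⟩ | ⟨y, hy, rfl⟩ <;>
        rcases hw with ⟨z, hz, rfl⟩ | ⟨z, hz, rfl⟩
    · -- LLL
      have hxy : x ≠ y := fun h => huv (congrArg _ h)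
      have hyz : y ≠ z := fun h => hvw (congrArg _ h)
      have hxz : x ≠ z := fun h => huw (congrArg _ h)
      have d1 := CP.two_le_dist_ll hG hxy (hsame x y (hx.trans hy.symm))
      have d2 := CP.two_le_dist_ll hG hyz (hsame y z (hy.trans hz.symm))
      have d3 := CP.dist_ll_le_three hG hxz (hsame x z (hx.trans hz.symm))
      omega
    · -- LLR
      have hxy : x ≠ y := fun h => huv (congrArg _ h)
      have hyz : y ≠ z := fun h => hz (h ▸ hy)
      have hxz : x ≠ z := fun h => hz (h ▸ hx)
      have d1 := CP.two_le_dist_ll hG hxy (hsame x y (hx.trans hy.symm))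
      have d2 := CP.dist_lr hG hyz
      have d3 := CP.dist_lr hG hxz
      omega
    · -- LRL
      have hxy : x ≠ y := fun h => hy (h ▸ hx)
      have hyz : y ≠ z := fun h => hy (h.symm ▸ hz)
      have hxz : x ≠ z := fun h => huw (congrArg _ h)
      have d1 := CP.dist_lr hG hxy
      have d2 := CP.dist_rl hG hyz
      have d3 := CP.dist_ll_le_three hG hxz (hsame x z (hx.trans hz.symm))
      omega
    · -- LRR
      have hxy : x ≠ y := fun h => hy (h ▸ hx)
      have hyz : y ≠ z := fun h => hvw (congrArg _ h)
      have hxz : x ≠ z := fun h => hz (h ▸ hx)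
      have d1 := CP.dist_lr hG hxy
      have hp : (y.1.val + y.2.val) % 2 = (z.1.val + z.2.val) % 2 := by
        simp only [hE, Set.mem_compl_iff, Set.mem_setOf_eq] at hy hz
        omega
      have d2 := CP.dist_rr_eq_one hG hyz (hsame y z hp)
      have d3 := CP.dist_lr hG hxz
      omega
    · -- RLL
      have hxy : x ≠ y := fun h => hx (h ▸ hy)
      have hyz : y ≠ z := fun h => hvw (congrArg _ h)
      have hxz : x ≠ z := fun h => hx (h ▸ hz)
      have d1 := CP.dist_rl hG hxy
      have d2 := CP.two_le_dist_ll hG hyz (hsame y z (hy.trans hz.symm))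
      have d3 := CP.dist_rl hG hxz
      omega
    · -- RLR
      have hxy : x ≠ y := fun h => hx (h ▸ hy)
      have hyz : y ≠ z := fun h => hz (h ▸ hy)
      have hxz : x ≠ z := fun h => huw (congrArg _ h)
      have d1 := CP.dist_rl hG hxy
      have d2 := CP.dist_lr hG hyz
      have hp : (x.1.val + x.2.val) % 2 = (z.1.val + z.2.val) % 2 := by
        simp only [hE, Set.mem_compl_iff, Set.mem_setOf_eq] at hx hz
        omega
      have d3 := CP.dist_rr_eq_one hG hxz (hsame x z hp)
      omega
    · -- RRL
      have hxy : x ≠ y := fun h => huv (congrArg _ h)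
      have hyz : y ≠ z := fun h => hy (h.symm ▸ hz)
      have hxz : x ≠ z := fun h => hx (h.symm ▸ hz)
      have hp : (x.1.val + x.2.val) % 2 = (y.1.val + y.2.val) % 2 := by
        simp only [hE, Set.mem_compl_iff, Set.mem_setOf_eq] at hx hy
        omega
      have d1 := CP.dist_rr_eq_one hG hxy (hsame x y hp)
      have d2 := CP.dist_rl hG hyz
      have d3 := CP.dist_rl hG hxz
      omega
    · -- RRR
      have hxy : x ≠ y := fun h => huv (congrArg _ h)
      have hyz : y ≠ z := fun h => hvw (congrArg _ h)
      have hxz : x ≠ z := fun h => huw (congrArg _ h)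
      have hp : ∀ a b : Fin n × Fin m, a ∈ Eᶜ → b ∈ Eᶜ →
          (a.1.val + a.2.val) % 2 = (b.1.val + b.2.val) % 2 := by
        intro a b ha hb
        simp only [hE, Set.mem_compl_iff, Set.mem_setOf_eq] at ha hb
        omega
      have d1 := CP.dist_rr_eq_one hG hxy (hsame x y (hp x y hx hy))
      have d2 := CP.dist_rr_eq_one hG hyz (hsame y z (hp y z hy hz))
      have d3 := CP.dist_rr_eq_one hG hxz (hsame x z (hp x z hx hz))
      omega
  · -- cardinality
    have hdisj : Disjoint (Sum.inl '' E) (Sum.inr '' (Eᶜ) :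
        Set ((Fin n × Fin m) ⊕ (Fin n × Fin m))) := by
      rw [Set.disjoint_left]
      rintro _ ⟨a, -, rfl⟩ ⟨b, -, hb⟩
      exact Sum.inl_ne_inr hb.symm
    rw [Set.ncard_union_eq hdisj (Set.toFinite _) (Set.toFinite _),
      Set.ncard_image_of_injective _ Sum.inl_injective,
      Set.ncard_image_of_injective _ Sum.inr_injective,
      Set.ncard_add_ncard_compl]
    simp [Nat.card_eq_fintype_card]

end LowerGeneral

section UpperGeneral
open Sum

lemma l1_comm {n m : ℕ} (u v : Fin n × Fin m) : l1 u v = l1 v u := by unfold l1; omega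

lemma l1_self {n m : ℕ} (u : Fin n × Fin m) : l1 u u = 0 := by unfold l1; omega

lemma dist_ll_eq_three_of_l1 {n m : ℕ} (hn : 2 ≤ n) (hm : 2 ≤ m) {x z : Fin n × Fin m}
    (h : 3 ≤ l1 x z) :
    (compPrism (Grid n m)).dist (Sum.inl x) (Sum.inl z) = 3 := by
  have hG := grid_connected hn hm
  have hne : x ≠ z := fun he => by rw [he, l1_self] at h; omega
  have hnadj : ¬ (Grid n m).Adj x z := grid_not_adj_of_l1 (by omega)
  have hub := CP.dist_ll_le_three hG hne hnadj
  have hlb : ¬ (compPrism (Grid n m)).dist (Sum.inl x) (Sum.inl z) ≤ 2 := by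
    intro hle
    rcases CP.dist_ll_cases hG hle with h' | h' | ⟨w, hw1, hw2⟩
    · exact hne h'
    · exact hnadj h'
    · exact grid_no_common_of_l1 h w ⟨hw1, hw2⟩
  omega

lemma upper_core {n m : ℕ} (hn : 2 ≤ n) (hm : 2 ≤ m)
    (S : Set ((Fin n × Fin m) ⊕ (Fin n × Fin m)))
    (hS : isGenPosSet (compPrism (Grid n m)) S) :
    S.ncard ≤ n * m + 1 ∧
      ((∀ x : Fin n × Fin m, ∃ z, 3 ≤ l1 x z) → S.ncard ≤ n * m) := by
  have hnm : 2 ≤ n * m := le_trans hn (Nat.le_mul_of_pos_right n (by omega))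
  have hG := grid_connected hn hm
  have hH := CP.connected hG
  set A : Set (Fin n × Fin m) := Sum.inl ⁻¹' S with hA
  set B : Set (Fin n × Fin m) := Sum.inr ⁻¹' S with hB
  have hSeq : S = Sum.inl '' A ∪ Sum.inr '' B := by
    ext p
    cases p <;> simp [hA, hB]
  have hdisj : Disjoint (Sum.inl '' A) (Sum.inr '' B :
      Set ((Fin n × Fin m) ⊕ (Fin n × Fin m))) := by
    rw [Set.disjoint_left]
    rintro _ ⟨a, -, rfl⟩ ⟨b, -, hb⟩
    exact Sum.inl_ne_inr hb.symm
  have hcard : S.ncard = A.ncard + B.ncard := by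
    rw [hSeq, Set.ncard_union_eq hdisj (Set.toFinite _) (Set.toFinite _),
      Set.ncard_image_of_injective _ Sum.inl_injective,
      Set.ncard_image_of_injective _ Sum.inr_injective]
  have hcardV : (Set.univ : Set (Fin n × Fin m)).ncard = n * m := by
    rw [Set.ncard_univ]
    simp [Nat.card_eq_fintype_card]
  by_cases hAB : (A ∩ B).Nonempty
  · obtain ⟨x, hxA, hxB⟩ := hAB
    have hxA' : Sum.inl x ∈ S := hxA
    have hxB' : Sum.inr x ∈ S := hxB
    have c1 : ∀ z ∈ A, z ≠ x → ¬ (Grid n m).Adj z x := by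
      intro z hz hne hadj
      refine hS (Sum.inl z) hz (Sum.inl x) hxA' (Sum.inr x) hxB'
        (fun h => hne (by simpa using h)) (by simp) (by simp) ?_
      refine ⟨hH _ _, ?_⟩
      rw [SimpleGraph.dist_eq_one_iff_adj.mpr (CP.adj_ll.mpr hadj),
        CP.dist_lr_self hG, CP.dist_lr hG hne]
    have c2 : ∀ z ∈ A, z ≠ x →
        (compPrism (Grid n m)).dist (Sum.inl z) (Sum.inl x) ≠ 3 := by
      intro z hz hne h3
      refine hS (Sum.inl z) hz (Sum.inr x) hxB' (Sum.inl x) hxA'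
        (by simp) (by simp) (fun h => hne (by simpa using h)) ?_
      refine ⟨hH _ _, ?_⟩
      rw [CP.dist_lr hG hne, h3, SimpleGraph.dist_comm, CP.dist_lr_self hG]
    have c3 : ∀ b ∈ B, b ≠ x → (Grid n m).Adj b x := by
      intro b hb hne
      by_contra hadj
      refine hS (Sum.inr b) hb (Sum.inr x) hxB' (Sum.inl x) hxA'
        (fun h => hne (by simpa using h)) (by simp) (by simp) ?_
      refine ⟨hH _ _, ?_⟩
      rw [CP.dist_rr_eq_one hG hne hadj, SimpleGraph.dist_comm, CP.dist_lr_self hG,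
        CP.dist_rl hG hne]
    have hdisj2 : Disjoint (A \ {x}) (B \ {x}) := by
      rw [Set.disjoint_left]
      rintro z ⟨hzA, hzx⟩ ⟨hzB, -⟩
      rw [Set.mem_singleton_iff] at hzx
      exact c1 z hzA hzx (c3 z hzB hzx)
    have hAcard : A.ncard ≤ (A \ {x}).ncard + 1 := by
      conv_lhs => rw [← Set.insert_eq_self.mpr hxA, ← Set.insert_diff_singleton]
      exact Set.ncard_insert_le _ _
    have hBcard : B.ncard ≤ (B \ {x}).ncard + 1 := by
      conv_lhs => rw [← Set.insert_eq_self.mpr hxB, ← Set.insert_diff_singleton]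
      exact Set.ncard_insert_le _ _
    have hsum : ∀ T : Set (Fin n × Fin m), (A \ {x}) ∪ (B \ {x}) ⊆ T →
        (A \ {x}).ncard + (B \ {x}).ncard ≤ T.ncard := by
      intro T hT
      rw [← Set.ncard_union_eq hdisj2 (Set.toFinite _) (Set.toFinite _)]
      exact Set.ncard_le_ncard hT (Set.toFinite _)
    constructor
    · have h1 : (A \ {x}) ∪ (B \ {x}) ⊆ Set.univ \ {x} := by
        rintro z (⟨hz, hzx⟩ | ⟨hz, hzx⟩) <;> exact ⟨Set.mem_univ _, hzx⟩
      have h2 : (Set.univ \ {x} : Set (Fin n × Fin m)).ncard = n * m - 1 := by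
        rw [Set.ncard_diff (Set.subset_univ _), hcardV, Set.ncard_singleton]
      have := hsum _ h1
      omega
    · intro hfar
      obtain ⟨z₀, hz₀⟩ := hfar x
      have hz₀x : z₀ ≠ x := fun he => by rw [he, l1_self] at hz₀; omega
      have hz₀A : z₀ ∉ A := by
        intro hmem
        refine c2 z₀ hmem hz₀x ?_
        rw [SimpleGraph.dist_comm]
        exact dist_ll_eq_three_of_l1 hn hm hz₀
      have hz₀B : z₀ ∉ B := by
        intro hmem
        exact grid_not_adj_of_l1 (by rw [l1_comm]; omega) (c3 z₀ hmem hz₀x)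
      have h1 : (A \ {x}) ∪ (B \ {x}) ⊆ Set.univ \ {x, z₀} := by
        rintro z (⟨hz, hzx⟩ | ⟨hz, hzx⟩) <;>
          refine ⟨Set.mem_univ _, ?_⟩ <;>
            rw [Set.mem_insert_iff, Set.mem_singleton_iff] <;>
              rintro (rfl | rfl)
        · exact hzx rfl
        · exact hz₀A hz
        · exact hzx rfl
        · exact hz₀B hz
      have h2 : (Set.univ \ {x, z₀} : Set (Fin n × Fin m)).ncard = n * m - 2 := by
        rw [Set.ncard_diff (Set.subset_univ _), hcardV, Set.ncard_pair hz₀x.symm]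
      have := hsum _ h1
      omega
  · have hle : S.ncard ≤ n * m := by
      rw [hcard, ← Set.ncard_union_eq (Set.disjoint_iff_inter_eq_empty.mpr
        (Set.not_nonempty_iff_eq_empty.mp hAB)) (Set.toFinite _) (Set.toFinite _)]
      exact le_trans (Set.ncard_le_ncard (Set.subset_univ _) (Set.toFinite _))
        (le_of_eq hcardV)
    exact ⟨by omega, fun _ => hle⟩

end UpperGeneral

section ThreeByThree
open Sum

def gridAdj {n m : ℕ} (u v : Fin n × Fin m) : Prop :=
  ((u.1.val + 1 = v.1.val ∨ v.1.val + 1 = u.1.val) ∧ u.2.val = v.2.val) ∨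
  ((u.2.val + 1 = v.2.val ∨ v.2.val + 1 = u.2.val) ∧ u.1.val = v.1.val)

instance gridAdj.dec {n m : ℕ} (u v : Fin n × Fin m) : Decidable (gridAdj u v) :=
  inferInstanceAs (Decidable (_ ∨ _))

lemma gridAdj_unfold {n m : ℕ} (u v : Fin n × Fin m) : gridAdj u v ↔
    ((u.1.val + 1 = v.1.val ∨ v.1.val + 1 = u.1.val) ∧ u.2.val = v.2.val) ∨
    ((u.2.val + 1 = v.2.val ∨ v.2.val + 1 = u.2.val) ∧ u.1.val = v.1.val) := Iff.rfl

lemma grid_adj_iff' {n m : ℕ} {u v : Fin n × Fin m} :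
    (Grid n m).Adj u v ↔ gridAdj u v := grid_adj_iff

private abbrev c33 : Fin 3 × Fin 3 := (1, 1)

private abbrev FA : Finset (Fin 3 × Fin 3) :=
  {((0 : Fin 3), (0 : Fin 3)), (0, 2), (2, 0), (2, 2), (1, 1)}
private abbrev FB : Finset (Fin 3 × Fin 3) :=
  {((0 : Fin 3), (1 : Fin 3)), (1, 0), (1, 2), (2, 1), (1, 1)}

lemma lower_33 :
    ∃ S : Set ((Fin 3 × Fin 3) ⊕ (Fin 3 × Fin 3)),
      isGenPosSet (compPrism (Grid 3 3)) S ∧ S.ncard = 10 := by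
  have hG : (Grid 3 3).Connected := grid_connected (by norm_num) (by norm_num)
  have hH := CP.connected hG
  set H := compPrism (Grid 3 3) with hHdef
  have f1 : ∀ a ∈ FA, ∀ b ∈ FA, a ≠ b → ¬ (Grid 3 3).Adj a b := by
    intro a ha b hb hne
    rw [grid_adj_iff']
    revert hne hb ha; revert a b; decide
  have f2 : ∀ a ∈ FB, ∀ b ∈ FB, a ≠ b → a ≠ c33 → b ≠ c33 → ¬ (Grid 3 3).Adj a b := by
    intro a ha b hb h1 h2 h3
    rw [grid_adj_iff']
    revert h1 h2 h3 hb ha; revert a b; decide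
  have f3 : ∀ a ∈ FA, a ≠ c33 → ∃ w, (Grid 3 3).Adj c33 w ∧ (Grid 3 3).Adj w a := by
    intro a ha hne
    simp only [grid_adj_iff']
    revert hne ha; revert a; decide
  have f4w : ∀ b ∈ FB, b ≠ c33 → (Grid 3 3).Adj c33 b ∧
      ∃ w, ¬ (Grid 3 3).Adj c33 w ∧ ¬ (Grid 3 3).Adj w b ∧ w ≠ c33 ∧ w ≠ b := by
    intro b hb hne
    simp only [grid_adj_iff']
    revert hne hb; revert b; decide
  have hABc : ∀ p : Fin 3 × Fin 3, p ∈ FA → p ∈ FB → p = c33 := by decide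
  have dA2 : ∀ a ∈ FA, ∀ b ∈ FA, a ≠ b → 2 ≤ H.dist (inl a) (inl b) := fun a ha b hb hne =>
    CP.two_le_dist_ll hG hne (f1 a ha b hb hne)
  have dA3 : ∀ a ∈ FA, ∀ b ∈ FA, a ≠ b → H.dist (inl a) (inl b) ≤ 3 := fun a ha b hb hne =>
    CP.dist_ll_le_three hG hne (f1 a ha b hb hne)
  have dAc : ∀ a ∈ FA, a ≠ c33 → H.dist (inl c33) (inl a) = 2 := by
    intro a ha hne
    obtain ⟨w, hw1, hw2⟩ := f3 a ha hne
    have hub := dist_le_two_of_common (G := H) (CP.adj_ll.mpr hw1) (CP.adj_ll.mpr hw2)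
    have hlb := dA2 c33 (by decide) a ha (Ne.symm hne)
    omega
  have dBc : ∀ b ∈ FB, b ≠ c33 → H.dist (inr c33) (inr b) = 2 := by
    intro b hb hne
    obtain ⟨hadj, w, hw1, hw2, hwc, hwb⟩ := f4w b hb hne
    exact CP.dist_rr_eq_two hG hadj hw1 hw2 hwc hwb
  have dB1 : ∀ a ∈ FB, ∀ b ∈ FB, a ≠ b → a ≠ c33 → b ≠ c33 →
      H.dist (inr a) (inr b) = 1 := fun a ha b hb h1 h2 h3 =>
    CP.dist_rr_eq_one hG h1 (f2 a ha b hb h1 h2 h3)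
  have dB_le2 : ∀ a ∈ FB, ∀ b ∈ FB, a ≠ b → H.dist (inr a) (inr b) ≤ 2 := by
    intro a ha b hb hne
    by_cases hac : a = c33
    · subst hac
      rw [dBc b hb (fun h => hne (h ▸ rfl))]
    · by_cases hbc : b = c33
      · subst hbc
        rw [SimpleGraph.dist_comm, dBc a ha hac]
      · rw [dB1 a ha b hb hne hac hbc]
        omega
  have dB_pos : ∀ a b : Fin 3 × Fin 3, a ≠ b → 1 ≤ H.dist (inr a) (inr b) :=
    fun a b hne => hH.pos_dist_of_ne (by simp [hne])
  have dcross : ∀ a b : Fin 3 × Fin 3, a ≠ b → H.dist (inl a) (inr b) = 2 :=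
    fun a b hne => CP.dist_lr hG hne
  have dcross_le : ∀ a b : Fin 3 × Fin 3, H.dist (inl a) (inr b) ≤ 2 := by
    intro a b
    by_cases h : a = b
    · subst h
      rw [CP.dist_lr_self hG]
      omega
    · rw [dcross a b h]
  have dself : ∀ a : Fin 3 × Fin 3, H.dist (inl a) (inr a) = 1 :=
    fun a => CP.dist_lr_self hG a
  have dc : ∀ (p q : (Fin 3 × Fin 3) ⊕ (Fin 3 × Fin 3)), H.dist p q = H.dist q p :=
    fun p q => SimpleGraph.dist_comm
  refine ⟨(Sum.inl '' (FA : Set (Fin 3 × Fin 3))) ∪ (Sum.inr '' (FB : Set (Fin 3 × Fin 3))),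
    ?_, ?_⟩
  · intro u hu v hv w hw huv hvw huw
    rintro ⟨-, heq⟩
    rcases hu with ⟨x, hx, rfl⟩ | ⟨x, hx, rfl⟩ <;>
      rcases hv with ⟨y, hy, rfl⟩ | ⟨y, hy, rfl⟩ <;>
        rcases hw with ⟨z, hz, rfl⟩ | ⟨z, hz, rfl⟩
    all_goals simp only [Finset.mem_coe] at hx hy hz
    · -- LLL
      have hxy : x ≠ y := fun h => huv (congrArg _ h)
      have hyz : y ≠ z := fun h => hvw (congrArg _ h)
      have hxz : x ≠ z := fun h => huw (congrArg _ h)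
      have := dA2 x hx y hy hxy
      have := dA2 y hy z hz hyz
      have := dA3 x hx z hz hxz
      omega
    · -- LLR
      have hxy : x ≠ y := fun h => huv (congrArg _ h)
      by_cases hyz : y = z
      · obtain rfl := hyz
        have e1 := dself y
        have e2 := dcross x y hxy
        have e3 := dA2 x hx y hy hxy
        omega
      · have e1 := dcross y z hyz
        have e2 := dA2 x hx y hy hxy
        have e3 := dcross_le x z
        omega
    · -- LRL
      have hxz : x ≠ z := fun h => huw (congrArg _ h)
      by_cases hxy : x = y
      · obtain rfl := hxy
        have hxc : x = c33 := hABc x hx hy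
        have e1 := dself x
        have e2 := dc (inr x) (inl z)
        have e3 := dcross z x (Ne.symm hxz)
        have e4 : H.dist (inl x) (inl z) = 2 := by
          rw [hxc]
          exact dAc z hz (fun h => hxz (by rw [hxc, h]))
        omega
      · by_cases hyz : y = z
        · obtain rfl := hyz
          have hyc : y = c33 := hABc y hz hy
          have e1 := dcross x y hxy
          have e2 := dc (inr y) (inl y)
          have e3 := dself y
          have e4 : H.dist (inl x) (inl y) = 2 := by
            rw [hyc, dc]
            exact dAc x hx (fun h => hxy (h.trans hyc.symm))
          omega
        · have e1 := dcross x y hxy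
          have e2 := dc (inr y) (inl z)
          have e3 := dcross z y (Ne.symm hyz)
          have e4 := dA3 x hx z hz hxz
          omega
    · -- LRR
      have hyz : y ≠ z := fun h => hvw (congrArg _ h)
      by_cases hxy : x = y
      · obtain rfl := hxy
        have hxc : x = c33 := hABc x hx hy
        have e1 := dself x
        have e2 : H.dist (inr x) (inr z) = 2 := by
          rw [hxc]
          exact dBc z hz (fun h => hyz (by rw [hxc, h]))
        have e3 := dcross x z hyz
        omega
      · by_cases hxz : x = z
        · obtain rfl := hxz
          have e1 := dcross x y hxy
          have e2 := dself x
          have e3 := dB_pos y x (fun h => hxy h.symm)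
          omega
        · have e1 := dcross x y hxy
          have e2 := dcross x z hxz
          have e3 := dB_pos y z hyz
          omega
    · -- RLL
      have hyz : y ≠ z := fun h => hvw (congrArg _ h)
      by_cases hxy : y = x
      · obtain rfl := hxy
        have hyc : y = c33 := hABc y hy hx
        have e1 := dc (inr y) (inl y)
        have e2 := dself y
        have e3 : H.dist (inl y) (inl z) = 2 := by
          rw [hyc]
          exact dAc z hz (fun h => hyz (by rw [hyc, h]))
        have e4 := dc (inr y) (inl z)
        have e5 := dcross z y (Ne.symm hyz)
        omega
      · have e1 := dc (inr x) (inl y)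
        have e2 := dcross y x (fun h => hxy h)
        have e3 := dA2 y hy z hz hyz
        have e4 := dc (inr x) (inl z)
        have e5 := dcross_le z x
        omega
    · -- RLR
      have hxz : x ≠ z := fun h => huw (congrArg _ h)
      by_cases hxy : y = x
      · obtain rfl := hxy
        have hyc : y = c33 := hABc y hy hx
        have e1 := dc (inr y) (inl y)
        have e2 := dself y
        have e3 := dcross y z hxz
        have e4 : H.dist (inr y) (inr z) = 2 := by
          rw [hyc]
          exact dBc z hz (fun h => hxz (by rw [hyc, h]))
        omega
      · by_cases hyz : y = z
        · obtain rfl := hyz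
          have hyc : y = c33 := hABc y hy hz
          have e1 := dc (inr x) (inl y)
          have e2 := dcross y x (fun h => hxy h)
          have e3 := dself y
          have e4 : H.dist (inr x) (inr y) = 2 := by
            rw [hyc, dc]
            exact dBc x hx (fun h => hxy (hyc.trans h.symm))
          omega
        · have e1 := dc (inr x) (inl y)
          have e2 := dcross y x (fun h => hxy h)
          have e3 := dcross y z hyz
          have e4 := dB_le2 x hx z hz hxz
          omega
    · -- RRL
      have hxy : x ≠ y := fun h => huv (congrArg _ h)
      by_cases hyz : y = z
      · obtain rfl := hyz
        have hyc : y = c33 := hABc y hz hy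
        have e1 : H.dist (inr x) (inr y) = 2 := by
          rw [hyc, dc]
          exact dBc x hx (fun h => hxy (h.trans hyc.symm))
        have e2 := dc (inr y) (inl y)
        have e3 := dself y
        have e4 := dc (inr x) (inl y)
        have e5 := dcross y x (Ne.symm hxy)
        omega
      · have e1 := dB_pos x y hxy
        have e2 := dc (inr y) (inl z)
        have e3 := dcross z y (Ne.symm hyz)
        have e4 := dc (inr x) (inl z)
        have e5 := dcross_le z x
        omega
    · -- RRR
      have hxy : x ≠ y := fun h => huv (congrArg _ h)
      have hyz : y ≠ z := fun h => hvw (congrArg _ h)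
      have hxz : x ≠ z := fun h => huw (congrArg _ h)
      by_cases hxc : x = c33
      · have e1 : H.dist (inr x) (inr y) = 2 := by
          rw [hxc]
          exact dBc y hy (fun h => hxy (by rw [hxc, h]))
        have e2 := dB_pos y z hyz
        have e3 : H.dist (inr x) (inr z) = 2 := by
          rw [hxc]
          exact dBc z hz (fun h => hxz (by rw [hxc, h]))
        omega
      · by_cases hzc : z = c33
        · have e1 := dB_pos x y hxy
          have e2 : H.dist (inr y) (inr z) = 2 := by
            rw [hzc, dc]
            exact dBc y hy (fun h => hyz (by rw [h, hzc]))
          have e3 : H.dist (inr x) (inr z) = 2 := by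
            rw [hzc, dc]
            exact dBc x hx (fun h => hxz (by rw [h, hzc]))
          omega
        · by_cases hyc : y = c33
          · have e1 : H.dist (inr x) (inr y) = 2 := by
              rw [hyc, dc]
              exact dBc x hx hxc
            have e2 : H.dist (inr y) (inr z) = 2 := by
              rw [hyc]
              exact dBc z hz hzc
            have e3 := dB_le2 x hx z hz hxz
            omega
          · have e1 := dB1 x hx y hy hxy hxc hyc
            have e2 := dB1 y hy z hz hyz hyc hzc
            have e3 := dB1 x hx z hz hxz hxc hzc
            omega
  · have hdisj : Disjoint (Sum.inl '' (FA : Set (Fin 3 × Fin 3)))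
        (Sum.inr '' (FB : Set (Fin 3 × Fin 3)) : Set ((Fin 3 × Fin 3) ⊕ (Fin 3 × Fin 3))) := by
      rw [Set.disjoint_left]
      rintro _ ⟨a, -, rfl⟩ ⟨b, -, hb⟩
      exact Sum.inl_ne_inr hb.symm
    rw [Set.ncard_union_eq hdisj (Set.toFinite _) (Set.toFinite _),
      Set.ncard_image_of_injective _ Sum.inl_injective,
      Set.ncard_image_of_injective _ Sum.inr_injective,
      Set.ncard_coe_finset, Set.ncard_coe_finset]
    decide

end ThreeByThree

section SmallUpper
open Sum

lemma upper_small {n m : ℕ} (hn : 2 ≤ n) (hm : 2 ≤ m)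
    (hP : ∀ x : Fin n × Fin m, (∀ z, l1 x z ≤ 2) →
        (Finset.univ.filter (fun z : Fin n × Fin m => z ≠ x ∧ ¬ gridAdj z x)).card
        + (Finset.univ.filter (fun b : Fin n × Fin m => gridAdj b x ∧
            ∃ a, a ≠ b ∧ a ≠ x ∧ ¬ gridAdj b a ∧ ¬ gridAdj a x)).card + 2 ≤ n * m)
    (S : Set ((Fin n × Fin m) ⊕ (Fin n × Fin m)))
    (hS : isGenPosSet (compPrism (Grid n m)) S) :
    S.ncard ≤ n * m := by
  have hnm : 2 ≤ n * m := le_trans hn (Nat.le_mul_of_pos_right n (by omega))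
  have hG := grid_connected hn hm
  have hH := CP.connected hG
  set A : Set (Fin n × Fin m) := Sum.inl ⁻¹' S with hA
  set B : Set (Fin n × Fin m) := Sum.inr ⁻¹' S with hB
  have hSeq : S = Sum.inl '' A ∪ Sum.inr '' B := by
    ext p
    cases p <;> simp [hA, hB]
  have hdisj : Disjoint (Sum.inl '' A) (Sum.inr '' B :
      Set ((Fin n × Fin m) ⊕ (Fin n × Fin m))) := by
    rw [Set.disjoint_left]
    rintro _ ⟨a, -, rfl⟩ ⟨b, -, hb⟩
    exact Sum.inl_ne_inr hb.symm
  have hcard : S.ncard = A.ncard + B.ncard := by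
    rw [hSeq, Set.ncard_union_eq hdisj (Set.toFinite _) (Set.toFinite _),
      Set.ncard_image_of_injective _ Sum.inl_injective,
      Set.ncard_image_of_injective _ Sum.inr_injective]
  have hcardV : (Set.univ : Set (Fin n × Fin m)).ncard = n * m := by
    rw [Set.ncard_univ]
    simp [Nat.card_eq_fintype_card]
  by_cases hAB : (A ∩ B).Nonempty
  · obtain ⟨x, hxA, hxB⟩ := hAB
    have hxA' : Sum.inl x ∈ S := hxA
    have hxB' : Sum.inr x ∈ S := hxB
    have c1 : ∀ z ∈ A, z ≠ x → ¬ (Grid n m).Adj z x := by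
      intro z hz hne hadj
      refine hS (Sum.inl z) hz (Sum.inl x) hxA' (Sum.inr x) hxB'
        (fun h => hne (by simpa using h)) (by simp) (by simp) ?_
      refine ⟨hH _ _, ?_⟩
      rw [SimpleGraph.dist_eq_one_iff_adj.mpr (CP.adj_ll.mpr hadj),
        CP.dist_lr_self hG, CP.dist_lr hG hne]
    have c2 : ∀ z ∈ A, z ≠ x →
        (compPrism (Grid n m)).dist (Sum.inl z) (Sum.inl x) ≠ 3 := by
      intro z hz hne h3
      refine hS (Sum.inl z) hz (Sum.inr x) hxB' (Sum.inl x) hxA'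
        (by simp) (by simp) (fun h => hne (by simpa using h)) ?_
      refine ⟨hH _ _, ?_⟩
      rw [CP.dist_lr hG hne, h3, SimpleGraph.dist_comm, CP.dist_lr_self hG]
    have c3 : ∀ b ∈ B, b ≠ x → (Grid n m).Adj b x := by
      intro b hb hne
      by_contra hadj
      refine hS (Sum.inr b) hb (Sum.inr x) hxB' (Sum.inl x) hxA'
        (fun h => hne (by simpa using h)) (by simp) (by simp) ?_
      refine ⟨hH _ _, ?_⟩
      rw [CP.dist_rr_eq_one hG hne hadj, SimpleGraph.dist_comm, CP.dist_lr_self hG,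
        CP.dist_rl hG hne]
    have hdisj2 : Disjoint (A \ {x}) (B \ {x}) := by
      rw [Set.disjoint_left]
      rintro z ⟨hzA, hzx⟩ ⟨hzB, -⟩
      rw [Set.mem_singleton_iff] at hzx
      exact c1 z hzA hzx (c3 z hzB hzx)
    have hAcard : A.ncard ≤ (A \ {x}).ncard + 1 := by
      conv_lhs => rw [← Set.insert_eq_self.mpr hxA, ← Set.insert_diff_singleton]
      exact Set.ncard_insert_le _ _
    have hBcard : B.ncard ≤ (B \ {x}).ncard + 1 := by
      conv_lhs => rw [← Set.insert_eq_self.mpr hxB, ← Set.insert_diff_singleton]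
      exact Set.ncard_insert_le _ _
    by_cases hfar : ∃ z, 3 ≤ l1 x z
    · -- same as the general argument
      have hsum : ∀ T : Set (Fin n × Fin m), (A \ {x}) ∪ (B \ {x}) ⊆ T →
          (A \ {x}).ncard + (B \ {x}).ncard ≤ T.ncard := by
        intro T hT
        rw [← Set.ncard_union_eq hdisj2 (Set.toFinite _) (Set.toFinite _)]
        exact Set.ncard_le_ncard hT (Set.toFinite _)
      obtain ⟨z₀, hz₀⟩ := hfar
      have hz₀x : z₀ ≠ x := fun he => by rw [he, l1_self] at hz₀; omega
      have hz₀A : z₀ ∉ A := by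
        intro hmem
        refine c2 z₀ hmem hz₀x ?_
        rw [SimpleGraph.dist_comm]
        exact dist_ll_eq_three_of_l1 hn hm hz₀
      have hz₀B : z₀ ∉ B := by
        intro hmem
        exact grid_not_adj_of_l1 (by rw [l1_comm]; omega) (c3 z₀ hmem hz₀x)
      have h1 : (A \ {x}) ∪ (B \ {x}) ⊆ Set.univ \ {x, z₀} := by
        rintro z (⟨hz, hzx⟩ | ⟨hz, hzx⟩) <;>
          refine ⟨Set.mem_univ _, ?_⟩ <;>
            rw [Set.mem_insert_iff, Set.mem_singleton_iff] <;>
              rintro (rfl | rfl)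
        · exact hzx rfl
        · exact hz₀A hz
        · exact hzx rfl
        · exact hz₀B hz
      have h2 : (Set.univ \ {x, z₀} : Set (Fin n × Fin m)).ncard = n * m - 2 := by
        rw [Set.ncard_diff (Set.subset_univ _), hcardV, Set.ncard_pair hz₀x.symm]
      have := hsum _ h1
      omega
    · push_neg at hfar
      have hball : ∀ z, l1 x z ≤ 2 := fun z => by have := hfar z; omega
      have hBsub : B \ {x} ⊆
          ↑(Finset.univ.filter (fun b : Fin n × Fin m => gridAdj b x ∧
            ∃ a, a ≠ b ∧ a ≠ x ∧ ¬ gridAdj b a ∧ ¬ gridAdj a x)) := by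
        rintro b ⟨hb, hbx'⟩
        rw [Set.mem_singleton_iff] at hbx'
        have hadj : (Grid n m).Adj b x := c3 b hb hbx'
        simp only [Finset.coe_filter, Set.mem_setOf_eq, Finset.mem_univ, true_and]
        refine ⟨grid_adj_iff'.mp hadj, ?_⟩
        by_contra hex
        push_neg at hex
        have hcom : ∀ w, ¬ ((compPrism (Grid n m)).Adj (Sum.inr b) w ∧
            (compPrism (Grid n m)).Adj w (Sum.inr x)) := by
          rintro (a | a) ⟨h1, h2⟩
          · exact hbx' ((CP.adj_rl.mp h1).trans (CP.adj_lr.mp h2))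
          · rw [CP.adj_rr] at h1 h2
            exact h2.2 (grid_adj_iff'.mpr (hex a (Ne.symm h1.1) h2.1
              (fun hg => h1.2 (grid_adj_iff'.mpr hg))))
        have h3 := CP.dist_rr_eq_three hG hadj hcom
        refine hS (Sum.inr b) hb (Sum.inl x) hxA' (Sum.inr x) hxB'
          (by simp) (by simp) (fun h => hbx' (by simpa using h)) ⟨hH _ _, ?_⟩
        rw [CP.dist_rl hG hbx', CP.dist_lr_self hG, h3]
      have hBle : (B \ {x}).ncard ≤
          (Finset.univ.filter (fun b : Fin n × Fin m => gridAdj b x ∧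
            ∃ a, a ≠ b ∧ a ≠ x ∧ ¬ gridAdj b a ∧ ¬ gridAdj a x)).card := by
        rw [← Set.ncard_coe_finset]
        exact Set.ncard_le_ncard hBsub (Set.toFinite _)
      have hAsub : A \ {x} ⊆
          ↑(Finset.univ.filter (fun z : Fin n × Fin m => z ≠ x ∧ ¬ gridAdj z x)) := by
        rintro z ⟨hzA, hzx⟩
        rw [Set.mem_singleton_iff] at hzx
        simp only [Finset.coe_filter, Set.mem_setOf_eq, Finset.mem_univ, true_and]
        exact ⟨hzx, fun h => c1 z hzA hzx (grid_adj_iff'.mpr h)⟩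
      have hAle : (A \ {x}).ncard ≤
          (Finset.univ.filter (fun z : Fin n × Fin m => z ≠ x ∧ ¬ gridAdj z x)).card := by
        rw [← Set.ncard_coe_finset]
        exact Set.ncard_le_ncard hAsub (Set.toFinite _)
      have := hP x hball
      omega
  · rw [hcard, ← Set.ncard_union_eq (Set.disjoint_iff_inter_eq_empty.mpr
      (Set.not_nonempty_iff_eq_empty.mp hAB)) (Set.toFinite _) (Set.toFinite _)]
    exact le_trans (Set.ncard_le_ncard (Set.subset_univ _) (Set.toFinite _))
      (le_of_eq hcardV)

end SmallUpper

section Assembly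

lemma gpNum_eq_of {W : Type*} {G : SimpleGraph W} {t : ℕ}
    (hex : ∃ S : Set W, isGenPosSet G S ∧ S.ncard = t)
    (hub : ∀ S : Set W, isGenPosSet G S → S.ncard ≤ t) : gpNum G = t := by
  unfold gpNum
  apply le_antisymm
  · apply csSup_le ⟨t, hex⟩
    rintro k ⟨S, hS, rfl⟩
    exact hub S hS
  · apply le_csSup
    · refine ⟨t, ?_⟩
      rintro k ⟨S, hS, rfl⟩
      exact hub S hS
    · exact hex

end Assembly

/-- For `n, m ≥ 2` and the grid `P_{nm} = P_n □ P_m`: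
`gp(P_{nm}\bar{P}_{nm}) = 10` if `n = m = 3`, and `gp(P_{nm}\bar{P}_{nm}) = nm`
otherwise. -/
theorem gp_compPrism_grid (n m : ℕ) (hn : 2 ≤ n) (hm : 2 ≤ m) :
    gpNum (compPrism ((pathGraph n).boxProd (pathGraph m))) =
      if n = 3 ∧ m = 3 then 10 else n * m := by
  by_cases h33 : n = 3 ∧ m = 3
  · obtain ⟨rfl, rfl⟩ := h33
    rw [if_pos ⟨rfl, rfl⟩]
    refine gpNum_eq_of lower_33 (fun S hS => ?_)
    have h := (upper_core (by norm_num) (by norm_num) S hS).1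
    omega
  · rw [if_neg h33]
    refine gpNum_eq_of (lower_general hn hm) ?_
    by_cases h4 : 4 ≤ n ∨ 4 ≤ m
    · exact fun S hS => (upper_core hn hm S hS).2 (far_exists hn hm h4)
    · push_neg at h4
      obtain ⟨hn4, hm4⟩ := h4
      have hn3 : n = 2 ∨ n = 3 := by omega
      have hm3 : m = 2 ∨ m = 3 := by omega
      rcases hn3 with rfl | rfl <;> rcases hm3 with rfl | rfl
      · exact fun S hS => upper_small (by norm_num) (by norm_num) (by decide) S hS
      · exact fun S hS => upper_small (by norm_num) (by norm_num) (by decide) S hS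
      · exact fun S hS => upper_small (by norm_num) (by norm_num) (by decide) S hS
      · exact absurd ⟨rfl, rfl⟩ h33
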